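/- Let H ≤ G₁ ≤ G₂ be groups and ℓ a prime. If the pair G₂/G₁ is ℓ-divisible witnessed by δ₂ subgroups and the pair G₁/H is ℓ-divisible witnessed by δ₁ subgroups, then G₂/H is ℓ-divisible witnessed by δ₁ + δ₂ subgroups. In particular, δ_ℓ(G₂/H) ≤ δ_ℓ(G₂/G₁) + δ_ℓ(G₁/H). -/
import Mathlib


/-- The pair `G/H` is `ℓ`-divisible, witnessed by `δ` intermediate subgroups. -/
def LDiv (ℓ : ℕ) {G : Type*} [Group G] (H : Subgroup G) (δ : ℕ) : Prop :=
  ∃ Gs : Fin δ → Subgroup G,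
    (∀ i, H ≤ Gs i) ∧
    ∀ σ : G, σ ∉ H → orderOf σ = ℓ →
      ∃ i : Fin δ, ∃ τ : G, IsConj σ τ ∧ τ ∈ Gs i ∧
        ∀ π ∈ Gs i, π * τ * π⁻¹ ∉ H

private lemma ldiv_tower {G₂ : Type*} [Group G₂] (ℓ : ℕ)
    (G₁ : Subgroup G₂) (H : Subgroup G₂) (hHG : H ≤ G₁) (δ₁ δ₂ : ℕ)
    (h₂ : LDiv ℓ G₁ δ₂) (h₁ : LDiv ℓ (H.subgroupOf G₁) δ₁) :
    LDiv ℓ H (δ₁ + δ₂) := by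
  obtain ⟨Gs₂, hle₂, hdiv₂⟩ := h₂
  obtain ⟨Gs₁, hle₁, hdiv₁⟩ := h₁
  refine ⟨Fin.append (fun i => (Gs₁ i).map G₁.subtype) Gs₂, ?_, ?_⟩
  · intro i
    refine Fin.addCases (fun j => ?_) (fun j => ?_) i
    · rw [Fin.append_left]
      intro h hh
      exact ⟨⟨h, hHG hh⟩, hle₁ j (by simpa [Subgroup.mem_subgroupOf] using hh), rfl⟩
    · rw [Fin.append_right]
      exact le_trans hHG (hle₂ j)
  · intro σ hσH hord
    by_cases hσG : σ ∈ G₁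
    · -- use the inner decomposition
      have hσ' : (⟨σ, hσG⟩ : G₁) ∉ H.subgroupOf G₁ := by
        simpa [Subgroup.mem_subgroupOf] using hσH
      have hord' : orderOf (⟨σ, hσG⟩ : G₁) = ℓ := by
        rw [Subgroup.orderOf_mk, hord]
      obtain ⟨i, τ, hconj, hτ, hnot⟩ := hdiv₁ _ hσ' hord'
      refine ⟨Fin.castAdd δ₂ i, (τ : G₂), ?_, ?_, ?_⟩
      · simpa using G₁.subtype.map_isConj hconj
      · rw [Fin.append_left]
        exact ⟨τ, hτ, rfl⟩
      · intro π hπ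
        rw [Fin.append_left] at hπ
        obtain ⟨π', hπ', rfl⟩ := hπ
        intro hmem
        exact hnot π' hπ' (by simpa [Subgroup.mem_subgroupOf] using hmem)
    · -- use the outer decomposition
      obtain ⟨i, τ, hconj, hτ, hnot⟩ := hdiv₂ σ hσG hord
      refine ⟨Fin.natAdd δ₁ i, τ, hconj, ?_, ?_⟩
      · rw [Fin.append_right]; exact hτ
      · intro π hπ
        rw [Fin.append_right] at hπ
        exact fun hmem => hnot π hπ (hHG hmem)

/-- Tower lemma: if `G₂/G₁` is `ℓ`-divisible with `δ₂` subgroups and `G₁/H` is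
`ℓ`-divisible with `δ₁` subgroups, then `G₂/H` is `ℓ`-divisible with `δ₁ + δ₂`
subgroups; in particular `δ_ℓ(G₂/H) ≤ δ_ℓ(G₂/G₁) + δ_ℓ(G₁/H)`. -/
theorem stmt1 {G₂ : Type*} [Group G₂] (ℓ : ℕ) (hℓ : ℓ.Prime)
    (G₁ : Subgroup G₂) (H : Subgroup G₂) (hHG : H ≤ G₁) (δ₁ δ₂ : ℕ)
    (h₂ : LDiv ℓ G₁ δ₂) (h₁ : LDiv ℓ (H.subgroupOf G₁) δ₁) :
    LDiv ℓ H (δ₁ + δ₂) ∧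
      sInf {δ | LDiv ℓ H δ} ≤
        sInf {δ | LDiv ℓ G₁ δ} + sInf {δ | LDiv ℓ (H.subgroupOf G₁) δ} := by
  refine ⟨ldiv_tower ℓ G₁ H hHG δ₁ δ₂ h₂ h₁, ?_⟩
  have ha : sInf {δ | LDiv ℓ G₁ δ} ∈ {δ | LDiv ℓ G₁ δ} :=
    Nat.sInf_mem ⟨δ₂, h₂⟩
  have hb : sInf {δ | LDiv ℓ (H.subgroupOf G₁) δ} ∈ {δ | LDiv ℓ (H.subgroupOf G₁) δ} :=
    Nat.sInf_mem ⟨δ₁, h₁⟩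
  have := ldiv_tower ℓ G₁ H hHG _ _ ha hb
  calc sInf {δ | LDiv ℓ H δ}
      ≤ sInf {δ | LDiv ℓ (H.subgroupOf G₁) δ} + sInf {δ | LDiv ℓ G₁ δ} :=
        Nat.sInf_le this
    _ = _ := Nat.add_comm _ _
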